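/- Let R = μ₀R⁰ + Σ_{i=1}^m μᵢR^{Jᵢ} be an anti-Clifford algebraic curvature tensor on an n-dimensional scalar product space (V,g) (i.e. JᵢJⱼ + JⱼJᵢ = 2δᵢⱼ·id for all i,j) with μᵢ ≠ 0 for all 1 ≤ i ≤ m and n > 2m. Suppose there exist real numbers θ₀,θ₁,…,θ_m, not all zero, and a null vector X ≠ 0 such that θ₀·X + θ₁·J₁X + ⋯ + θ_m·J_mX = 0 and θ₀² = Σ_{i=1}^m θᵢ² = −μ₀·Σ_{i=1}^m θᵢ²/(3μᵢ). Then R is not totally Jacobi-dual. -/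

import Mathlib

open Module Finset

/-- The algebraic curvature tensor `R⁰` of constant sectional curvature one. -/
def R0 {V : Type*} [AddCommGroup V] [Module ℝ V] (g : LinearMap.BilinForm ℝ V)
    (X Y Z W : V) : ℝ :=
  g Y Z * g X W - g X Z * g Y W

/-- The algebraic curvature tensor `R^J` generated by a `g`-skew-adjoint endomorphism `J`. -/
def RJ {V : Type*} [AddCommGroup V] [Module ℝ V] (g : LinearMap.BilinForm ℝ V)
    (J : V →ₗ[ℝ] V) (X Y Z W : V) : ℝ :=
  g (J X) Z * g (J Y) W - g (J Y) Z * g (J X) W + 2 * g (J X) Y * g (J Z) W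
section Aux
set_option linter.unusedSectionVars false
variable {V : Type*} [AddCommGroup V] [Module ℝ V] [FiniteDimensional ℝ V]

lemma sum_sq_eq_zero' {m : ℕ} {a : Fin m → ℝ} (h : ∑ i, a i ^ 2 = 0) : ∀ i, a i = 0 := by
  intro i
  have h2 : ∀ j ∈ Finset.univ, (0:ℝ) ≤ a j ^ 2 := fun j _ => sq_nonneg _
  have := (Finset.sum_eq_zero_iff_of_nonneg h2).mp h i (Finset.mem_univ i)
  exact pow_eq_zero_iff (two_ne_zero) |>.mp this

lemma isotropic_bound (g : LinearMap.BilinForm ℝ V) (hnd : g.Nondegenerate)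
    (N : Submodule ℝ V) (hiso : ∀ u ∈ N, ∀ v ∈ N, g u v = 0) :
    2 * finrank ℝ N ≤ finrank ℝ V := by
  classical
  let ψ : V →ₗ[ℝ] Module.Dual ℝ N := N.dualRestrict ∘ₗ (g.toDual hnd).toLinearMap
  have hsurj : Function.Surjective ψ :=
    (Subspace.dualRestrict_surjective).comp (g.toDual hnd).surjective
  have hker : N ≤ LinearMap.ker ψ := by
    intro u hu
    rw [LinearMap.mem_ker]
    ext ⟨v, hv⟩
    simp only [ψ, LinearMap.comp_apply, LinearEquiv.coe_coe, Submodule.dualRestrict_apply,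
      LinearMap.zero_apply]
    rw [LinearMap.BilinForm.toDual_def]
    exact hiso u hu v hv
  have h1 := LinearMap.finrank_range_add_finrank_ker ψ
  have h2 : finrank ℝ N ≤ finrank ℝ (LinearMap.ker ψ) := Submodule.finrank_mono hker
  have h3 : finrank ℝ (LinearMap.range ψ) = finrank ℝ N := by
    rw [LinearMap.range_eq_top.mpr hsurj, finrank_top, Subspace.dual_finrank_eq]
  omega

lemma cliff {m : ℕ} (J : Fin m → V →ₗ[ℝ] V)
    (hhur : ∀ i j, J i ∘ₗ J j + J j ∘ₗ J i
      = ((if i = j then 2 else 0 : ℝ) • LinearMap.id : V →ₗ[ℝ] V))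
    (a : Fin m → ℝ) (v : V) :
    ∑ i, a i • J i (∑ j, a j • J j v) = (∑ i, a i ^ 2) • v := by
  classical
  have expand : ∑ i, a i • J i (∑ j, a j • J j v)
      = ∑ i, ∑ j, (a i * a j) • J i (J j v) := by
    refine Finset.sum_congr rfl fun i _ => ?_
    rw [map_sum, Finset.smul_sum]
    exact Finset.sum_congr rfl fun j _ => by rw [map_smul, smul_smul]
  set S := ∑ i, ∑ j, (a i * a j) • J i (J j v) with hS
  have hswap : S = ∑ i, ∑ j, (a i * a j) • J j (J i v) := by
    rw [hS, Finset.sum_comm]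
    exact Finset.sum_congr rfl fun j _ => Finset.sum_congr rfl fun i _ => by rw [mul_comm]
  have hpair : ∀ i j, J i (J j v) + J j (J i v) = (if i = j then (2:ℝ) else 0) • v := by
    intro i j
    have h := LinearMap.congr_fun (hhur i j) v
    simp only [LinearMap.add_apply, LinearMap.comp_apply, LinearMap.smul_apply,
      LinearMap.id_apply] at h
    exact h
  have hdouble : S + S = ∑ i, ∑ j, (a i * a j) • ((if i = j then (2:ℝ) else 0) • v) := by
    rw [show S + S = S + ∑ i, ∑ j, (a i * a j) • J j (J i v) by rw [← hswap], hS,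
      ← Finset.sum_add_distrib]
    refine Finset.sum_congr rfl fun i _ => ?_
    rw [← Finset.sum_add_distrib]
    refine Finset.sum_congr rfl fun j _ => ?_
    rw [← smul_add, hpair]
  have hdiag : S + S = (2 * ∑ i, a i ^ 2) • v := by
    rw [hdouble]
    have : ∀ i ∈ Finset.univ, ∑ j, (a i * a j) • ((if i = j then (2:ℝ) else 0) • v)
        = (2 * a i ^ 2) • v := by
      intro i _
      rw [Finset.sum_eq_single i]
      · rw [if_pos rfl, smul_smul]; ring_nf
      · intro j _ hj; rw [if_neg (Ne.symm hj)]; simp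
      · intro h; exact absurd (Finset.mem_univ i) h
    rw [Finset.sum_congr rfl this, ← Finset.sum_smul, ← Finset.mul_sum]
  rw [expand, hS]
  have h2 : (2:ℝ) • S = (2:ℝ) • ((∑ i, a i ^ 2) • v) := by
    rw [two_smul, hdiag, smul_smul]
  have := congrArg (fun w => (2:ℝ)⁻¹ • w) h2
  simpa [smul_smul] using this

end Aux

/-- Theorem 9 of the paper: an anti-Clifford algebraic curvature tensor
(`JᵢJⱼ + JⱼJᵢ = 2δᵢⱼ id`, `μᵢ ≠ 0`) of dimension `n > 2m`, for which there are
`θ₀, …, θ_m`, not all zero, and a null `X ≠ 0` with `θ₀X + θ₁J₁X + ⋯ + θ_mJ_mX = 0`,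
`θ₀² = ∑ θᵢ² = −μ₀ ∑ θᵢ²/(3μᵢ)`, is not totally Jacobi-dual. -/
theorem antiClifford_not_totally_jacobiDual
    {V : Type*} [AddCommGroup V] [Module ℝ V] [FiniteDimensional ℝ V]
    (g : LinearMap.BilinForm ℝ V) (hsymm : ∀ x y, g x y = g y x) (hnd : g.Nondegenerate)
    {m : ℕ} (μ₀ : ℝ) (μ : Fin m → ℝ) (J : Fin m → V →ₗ[ℝ] V)
    (hskew : ∀ i, ∀ x y : V, g (J i x) y = - g x (J i y))
    (hhur : ∀ i j, J i ∘ₗ J j + J j ∘ₗ J i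
      = ((if i = j then 2 else 0 : ℝ) • LinearMap.id : V →ₗ[ℝ] V))
    (hμ : ∀ i, μ i ≠ 0)
    (n : ℕ) (hn : Module.finrank ℝ V = n) (hnm : n > 2 * m)
    (R : V → V → V → V → ℝ)
    (hR : ∀ X Y Z W, R X Y Z W = μ₀ * R0 g X Y Z W + ∑ i, μ i * RJ g (J i) X Y Z W)
    (Jac : V → V →ₗ[ℝ] V)
    (hJac : ∀ X Y Z, g (Jac X Y) Z = R Y X X Z)
    (θ₀ : ℝ) (θ : Fin m → ℝ) (hθ : ¬ (θ₀ = 0 ∧ ∀ i, θ i = 0))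
    (X : V) (hX0 : X ≠ 0) (hXnull : g X X = 0)
    (hdep : θ₀ • X + ∑ i, θ i • J i X = 0)
    (hcond₁ : θ₀ ^ 2 = ∑ i, θ i ^ 2)
    (hcond₂ : (∑ i, θ i ^ 2) = -μ₀ * ∑ i, θ i ^ 2 / (3 * μ i)) :
    ¬ (∀ X Y : V, X ≠ 0 →
        (∃ lam : ℝ, Module.End.HasEigenvector (Jac X) lam Y) →
        ∃ lam : ℝ, Module.End.HasEigenvector (Jac Y) lam X) := by

  classical
  intro hdual
  -- basic nonvanishing facts
  have hθ₀ : θ₀ ≠ 0 := by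
    intro h0
    apply hθ
    refine ⟨h0, sum_sq_eq_zero' ?_⟩
    rw [← hcond₁, h0]; ring
  have hμ₀ : μ₀ ≠ 0 := by
    intro h0
    rw [h0] at hcond₂
    simp only [neg_zero, zero_mul] at hcond₂
    exact hθ₀ (pow_eq_zero_iff two_ne_zero |>.mp (hcond₁.trans hcond₂))
  -- basic bilinear form facts
  have gJvv : ∀ i (v : V), g (J i v) v = 0 := by
    intro i v
    have h1 : g (J i v) v = - g v (J i v) := hskew i v v
    rw [hsymm v (J i v)] at h1; linarith
  have gJJXX : ∀ i j, g (J i X) (J j X) = 0 := by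
    intro i j
    have h1 : g (J i X) (J j X) = - g X (J i (J j X)) := hskew i X (J j X)
    have h2 : g (J j X) (J i X) = - g X (J j (J i X)) := hskew j X (J i X)
    have h3 : g (J i X) (J j X) = g (J j X) (J i X) := hsymm _ _
    have h4 : J i (J j X) + J j (J i X) = (if i = j then (2:ℝ) else 0) • X := by
      have h := LinearMap.congr_fun (hhur i j) X
      simp only [LinearMap.add_apply, LinearMap.comp_apply, LinearMap.smul_apply,
        LinearMap.id_apply] at h
      exact h
    have h5 : g X (J i (J j X)) + g X (J j (J i X)) = 0 := by
      rw [← map_add (g X), h4, map_smul, hXnull, smul_eq_mul, mul_zero]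
    linarith
  -- linear independence of the J i X
  have hindep : ∀ a : Fin m → ℝ, ∑ i, a i • J i X = 0 → ∀ i, a i = 0 := by
    intro a ha
    have h1 := cliff J hhur a X
    rw [ha] at h1
    simp only [map_zero, smul_zero, Finset.sum_const_zero] at h1
    refine sum_sq_eq_zero' ?_
    rcases smul_eq_zero.mp h1.symm with h | h
    · exact h
    · exact absurd h hX0
  -- the coefficient family
  set c : Fin m → ℝ := fun i => θ i / (3 * μ i) with hc
  have hcθ : ∀ i, 3 * μ i * c i = θ i := by
    intro i
    have h3 : (3:ℝ) * μ i ≠ 0 := mul_ne_zero three_ne_zero (hμ i)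
    rw [hc]
    field_simp
    exact mul_div_cancel_left₀ _ (hμ i)
  -- sum identity: ∑ θᵢ * cᵢ = -θ₀²/μ₀
  have hsum3 : ∑ i, θ i * c i = -(θ₀ ^ 2 / μ₀) := by
    have e1 : ∑ i, θ i * c i = ∑ i, θ i ^ 2 / (3 * μ i) := by
      refine Finset.sum_congr rfl fun i _ => ?_
      rw [hc]; ring
    rw [e1]
    rw [← hcond₁] at hcond₂
    rw [hcond₂, neg_mul, neg_div, neg_neg, mul_div_cancel_left₀ _ hμ₀]
  -- construction of Y₀
  have hli : LinearIndependent ℝ (fun i => J i X) := by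
    rw [Fintype.linearIndependent_iff]
    exact hindep
  obtain ⟨Y₀, hJY₀⟩ : ∃ Y₀ : V, ∀ i, g (J i X) Y₀ = c i := by
    set Sp := Submodule.span ℝ (Set.range fun i => J i X) with hSpdef
    let b : Basis (Fin m) ℝ Sp := Basis.span hli
    let F : Module.Dual ℝ Sp := ∑ i, c i • b.coord i
    obtain ⟨F', hF'⟩ := Subspace.dualRestrict_surjective (W := Sp) F
    refine ⟨(g.toDual hnd).symm F', fun i => ?_⟩
    have hmem : J i X ∈ Sp := Submodule.subset_span ⟨i, rfl⟩
    rw [hsymm, LinearMap.BilinForm.apply_toDual_symm_apply]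
    have h1 : F' (J i X) = F ⟨J i X, hmem⟩ := by
      rw [← hF']; rfl
    rw [h1]
    have hbi : (⟨J i X, hmem⟩ : Sp) = b i := by
      apply Subtype.ext
      rw [Basis.span_apply]
    rw [hbi]
    simp only [F, LinearMap.sum_apply, LinearMap.smul_apply, Basis.coord_apply,
      Basis.repr_self, smul_eq_mul]
    rw [Finset.sum_eq_single i]
    · simp
    · intro j _ hj; simp [Finsupp.single_apply, hj.symm]
    · intro h; exact absurd (Finset.mem_univ i) h
  -- derived value of g X Y' for admissible Y'
  have hXY'gen : ∀ Y' : V, (∀ i, g (J i X) Y' = c i) → g X Y' = θ₀ / μ₀ := by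
    intro Y' hv
    have h0 : g (θ₀ • X + ∑ i, θ i • J i X) Y' = 0 := by rw [hdep]; simp
    simp only [map_add, map_smul, map_sum, LinearMap.add_apply, LinearMap.sum_apply,
      LinearMap.smul_apply, smul_eq_mul, hv] at h0
    rw [hsum3] at h0
    have h1 : θ₀ * g X Y' = θ₀ ^ 2 / μ₀ := by linarith
    apply mul_left_cancel₀ hθ₀
    rw [h1]
    ring
  -- Jacobi operator at X kills admissible Y'
  have hJacX : ∀ Y' : V, (∀ i, g (J i X) Y' = c i) → Jac X Y' = 0 := by
    intro Y' hv
    have hXY' : g X Y' = θ₀ / μ₀ := hXY'gen Y' hv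
    refine hnd.1 _ fun Z => ?_
    rw [hJac, hR]
    simp only [R0, RJ]
    have hJY'X : ∀ i, g (J i Y') X = - c i := by
      intro i
      rw [hskew i Y' X, hsymm Y' (J i X), hv i]
    have hterm : ∀ i ∈ Finset.univ,
        μ i * (g (J i Y') X * g (J i X) Z - g (J i X) X * g (J i Y') Z
          + 2 * g (J i Y') X * g (J i X) Z)
        = -(θ i * g (J i X) Z) := by
      intro i _
      rw [hJY'X i, gJvv i X, ← hcθ i]
      ring
    rw [Finset.sum_congr rfl hterm]
    have hzero : g (θ₀ • X + ∑ i, θ i • J i X) Z = 0 := by rw [hdep]; simp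
    simp only [map_add, map_smul, map_sum, LinearMap.add_apply, LinearMap.sum_apply,
      LinearMap.smul_apply, smul_eq_mul] at hzero
    rw [hXnull, hsymm Y' X, hXY', Finset.sum_neg_distrib]
    have h9 : μ₀ * (θ₀ * (g X) Z + ∑ x, θ x * (g ((J x) X)) Z) = 0 := by
      rw [hzero, mul_zero]
    field_simp
    linarith [h9]
  -- Jacobi operator at admissible Y' applied to X
  have hJacY' : ∀ Y' : V, (∀ i, g (J i X) Y' = c i) →
      Jac Y' X = (μ₀ * g Y' Y') • X + ((∑ i, θ i • J i Y') - θ₀ • Y') := by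
    intro Y' hv
    have hXY' : g X Y' = θ₀ / μ₀ := hXY'gen Y' hv
    have key : ∀ Z, g (Jac Y' X) Z
        = g ((μ₀ * g Y' Y') • X + ((∑ i, θ i • J i Y') - θ₀ • Y')) Z := by
      intro Z
      rw [hJac, hR]
      simp only [R0, RJ]
      have hterm : ∀ i ∈ Finset.univ,
          μ i * (g (J i X) Y' * g (J i Y') Z - g (J i Y') Y' * g (J i X) Z
            + 2 * g (J i X) Y' * g (J i Y') Z)
          = θ i * g (J i Y') Z := by
        intro i _
        rw [hv i, gJvv i Y', ← hcθ i]
        ring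
      rw [Finset.sum_congr rfl hterm]
      simp only [map_add, map_smul, map_sub, map_sum, LinearMap.add_apply, LinearMap.sub_apply,
        LinearMap.sum_apply, LinearMap.smul_apply, smul_eq_mul]
      rw [hXY']
      field_simp
      ring
    have hz := hnd.1 (Jac Y' X - ((μ₀ * g Y' Y') • X + ((∑ i, θ i • J i Y') - θ₀ • Y')))
      (fun Z => by rw [map_sub, LinearMap.sub_apply, key]; ring)
    exact sub_eq_zero.mp hz
  -- the operator T and the comap submodule
  set T : V →ₗ[ℝ] V := (∑ i, θ i • J i) - θ₀ • LinearMap.id with hT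
  have hTapp : ∀ v, T v = (∑ i, θ i • J i v) - θ₀ • v := by
    intro v
    rw [hT]
    simp [LinearMap.sub_apply, LinearMap.sum_apply, LinearMap.smul_apply]
  set Wsp : Submodule ℝ V := (Submodule.span ℝ {X}).comap T with hWsp
  -- admissible vectors land in Wsp, via the duality hypothesis
  have hmemW : ∀ Y' : V, (∀ i, g (J i X) Y' = c i) → Y' ∈ Wsp := by
    intro Y' hv
    have hY'ne : Y' ≠ 0 := by
      intro h0
      have := hXY'gen Y' hv
      rw [h0] at this
      simp only [map_zero] at this
      exact hθ₀ (by field_simp at this; linarith)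
    have heig : ∃ lam : ℝ, Module.End.HasEigenvector (Jac X) lam Y' :=
      ⟨0, ⟨Module.End.mem_eigenspace_iff.mpr (by rw [hJacX Y' hv]; simp), hY'ne⟩⟩
    obtain ⟨lam, hlam⟩ := hdual X Y' hX0 heig
    have happ : Jac Y' X = lam • X := Module.End.mem_eigenspace_iff.mp hlam.1
    have hTY' : T Y' = (lam - μ₀ * g Y' Y') • X := by
      rw [hTapp]
      rw [sub_smul, ← happ, hJacY' Y' hv]
      abel
    refine Submodule.mem_comap.mpr ?_
    rw [hTY']
    exact Submodule.smul_mem _ _ (Submodule.mem_span_singleton_self X)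
  -- the perp of the span of the J i X
  set Φ : V →ₗ[ℝ] (Fin m → ℝ) := LinearMap.pi (fun i => g (J i X)) with hΦ
  have hSpW : LinearMap.ker Φ ≤ Wsp := by
    intro Z hZ
    have hZ' : ∀ i, g (J i X) Z = 0 := fun i => congrFun (LinearMap.mem_ker.mp hZ) i
    have hvZ : ∀ i, g (J i X) (Y₀ + Z) = c i := by
      intro i; rw [map_add, hZ' i, add_zero, hJY₀ i]
    have h1 := hmemW (Y₀ + Z) hvZ
    have h2 := hmemW Y₀ hJY₀
    have h3 := Wsp.sub_mem h1 h2
    simpa using h3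
  have hY₀W : Y₀ ∈ Wsp := hmemW Y₀ hJY₀
  have hY₀Sp : Y₀ ∉ LinearMap.ker Φ := by
    intro hmem
    obtain ⟨i, hi⟩ : ∃ i, θ i ≠ 0 := by
      by_contra hall
      push_neg at hall
      apply hθ₀
      refine pow_eq_zero_iff two_ne_zero |>.mp ?_
      rw [hcond₁]
      exact Finset.sum_eq_zero fun i _ => by rw [hall i]; ring
    have h0 : g (J i X) Y₀ = 0 := congrFun (LinearMap.mem_ker.mp hmem) i
    rw [hJY₀ i, hc] at h0
    simp only [div_eq_zero_iff] at h0
    rcases h0 with h0 | h0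
    · exact hi h0
    · exact hμ i (by linarith)
  -- dimension bounds
  have hSp_rank : n ≤ finrank ℝ (LinearMap.ker Φ) + m := by
    have h1 := LinearMap.finrank_range_add_finrank_ker Φ
    have h2 : finrank ℝ (LinearMap.range Φ) ≤ m := by
      have := Submodule.finrank_le (LinearMap.range Φ)
      simpa using this
    rw [hn] at h1
    omega
  have hlt : finrank ℝ (LinearMap.ker Φ) < finrank ℝ Wsp := by
    have hsub : LinearMap.ker Φ < LinearMap.ker Φ ⊔ Submodule.span ℝ {Y₀} := by
      refine lt_of_le_of_ne le_sup_left fun he => hY₀Sp ?_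
      rw [he]
      exact Submodule.mem_sup_right (Submodule.mem_span_singleton_self Y₀)
    have hsup_le : LinearMap.ker Φ ⊔ Submodule.span ℝ {Y₀} ≤ Wsp :=
      sup_le hSpW (Submodule.span_le.mpr (by simpa using hY₀W))
    calc finrank ℝ (LinearMap.ker Φ)
        < finrank ℝ ↥(LinearMap.ker Φ ⊔ Submodule.span ℝ {Y₀}) :=
          Submodule.finrank_lt_finrank_of_lt hsub
      _ ≤ finrank ℝ Wsp := Submodule.finrank_mono hsup_le
  have hW_rank : finrank ℝ Wsp ≤ finrank ℝ (LinearMap.ker T) + 1 := by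
    have hres : ∀ x ∈ Wsp, T x ∈ Submodule.span ℝ {X} := by
      intro x hx
      rw [hWsp] at hx
      exact Submodule.mem_comap.mp hx
    set T' := T.restrict hres with hT'
    have h1 := LinearMap.finrank_range_add_finrank_ker T'
    have h2 : finrank ℝ (LinearMap.range T') ≤ 1 := by
      have h := Submodule.finrank_le (LinearMap.range T')
      rwa [finrank_span_singleton hX0] at h
    have h3 : finrank ℝ (LinearMap.ker T') ≤ finrank ℝ (LinearMap.ker T) := by
      have hin : ∀ x : LinearMap.ker T', ((Wsp.subtype ∘ₗ (LinearMap.ker T').subtype) x)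
          ∈ LinearMap.ker T := by
        intro x
        have hx : T' x.1 = 0 := x.2
        rw [LinearMap.mem_ker]
        exact congrArg Subtype.val hx
      let e : LinearMap.ker T' →ₗ[ℝ] LinearMap.ker T :=
        LinearMap.codRestrict _ (Wsp.subtype ∘ₗ (LinearMap.ker T').subtype) hin
      have einj : Function.Injective e := by
        intro x y hxy
        have h1 : ((x.1 : V)) = ((y.1 : V)) :=
          congrArg (fun z : LinearMap.ker T => (z : V)) hxy
        exact Subtype.ext (Subtype.ext h1)
      exact LinearMap.finrank_le_finrank_of_injective einj
    omega
  have hkerT_iso : ∀ u ∈ LinearMap.ker T, ∀ v ∈ LinearMap.ker T, g u v = 0 := by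
    intro u hu v hv
    have hKu : ∑ i, θ i • J i u = θ₀ • u := by
      have h := LinearMap.mem_ker.mp hu
      rw [hTapp] at h
      exact sub_eq_zero.mp h
    have hKv : ∑ i, θ i • J i v = θ₀ • v := by
      have h := LinearMap.mem_ker.mp hv
      rw [hTapp] at h
      exact sub_eq_zero.mp h
    have h1 : g (∑ i, θ i • J i u) v = - g u (∑ i, θ i • J i v) := by
      rw [map_sum, map_sum]
      simp only [map_smul, LinearMap.sum_apply, LinearMap.smul_apply, smul_eq_mul]
      rw [← Finset.sum_neg_distrib]
      refine Finset.sum_congr rfl fun i _ => ?_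
      rw [hskew i u v]
      ring
    rw [hKu, hKv] at h1
    simp only [map_smul, LinearMap.smul_apply, smul_eq_mul] at h1
    have : θ₀ * g u v = - (θ₀ * g u v) := h1
    have h2 : θ₀ * g u v = 0 := by linarith
    rcases mul_eq_zero.mp h2 with h | h
    · exact absurd h hθ₀
    · exact h
  have hker_bound := isotropic_bound g hnd (LinearMap.ker T) hkerT_iso
  rw [hn] at hker_bound
  omega
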